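/- Let r = Σ_{n>0} (x^{n²} + x^{2n²} + x^{3n²} + x^{6n²}) in Z/2[[x]], F = Σ_{n odd, n>0} x^{n²}, and G = F(x³). Then r² + r = F + G. -/

import Mathlib

open PowerSeries Classical

/-- `Σ_{n > 0} x^{c·n²}` in `Z/2[[x]]`. -/
noncomputable def thetaC (c : ℕ) : PowerSeries (ZMod 2) :=
  PowerSeries.mk fun n => if ∃ k : ℕ, 0 < k ∧ n = c * k ^ 2 then 1 else 0

/-- `r = Σ_{n>0} (x^{n²} + x^{2n²} + x^{3n²} + x^{6n²})` in `Z/2[[x]]`. -/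
noncomputable def rser : PowerSeries (ZMod 2) :=
  thetaC 1 + thetaC 2 + thetaC 3 + thetaC 6

/-- `F = Σ_{n odd, n > 0} x^{n²}` in `Z/2[[x]]`. -/
noncomputable def Fser : PowerSeries (ZMod 2) :=
  PowerSeries.mk fun n => if ∃ k : ℕ, Odd k ∧ 0 < k ∧ n = k ^ 2 then 1 else 0

/-- `G = F(x³) = Σ_{n odd, n > 0} x^{3n²}` in `Z/2[[x]]`. -/
noncomputable def Gser : PowerSeries (ZMod 2) :=
  PowerSeries.mk fun n => if ∃ k : ℕ, Odd k ∧ 0 < k ∧ n = 3 * k ^ 2 then 1 else 0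

lemma zmod2_mul_self (a : ZMod 2) : a * a = a := by revert a; decide

lemma sum_sq (g : ℕ → ZMod 2) (n : ℕ) :
    ∑ p ∈ Finset.HasAntidiagonal.antidiagonal n, g p.1 * g p.2 = if Even n then g (n / 2) else 0 := by
  by_cases h : Even n
  · obtain ⟨m, hm⟩ := h
    have hmem : (m, m) ∈ Finset.HasAntidiagonal.antidiagonal n := by simp [hm]
    rw [if_pos ⟨m, hm⟩, ← Finset.insert_erase hmem, Finset.sum_insert (Finset.notMem_erase _ _)]
    have h0 : ∑ p ∈ (Finset.HasAntidiagonal.antidiagonal n).erase (m, m), g p.1 * g p.2 = 0 := by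
      apply Finset.sum_involution (fun p _ => Prod.swap p)
      · intro a _; rw [mul_comm]; exact CharTwo.add_self_eq_zero _
      · intro a ha _
        rcases Finset.mem_erase.mp ha with ⟨hne, hmem'⟩
        intro hsw
        apply hne
        have : a.1 = a.2 := by
          have := congrArg Prod.fst hsw; simpa [Prod.swap] using this.symm
        have h12 : a.1 + a.2 = n := Finset.HasAntidiagonal.mem_antidiagonal.mp hmem'
        have : a.1 = m := by omega
        have h2 : a.2 = m := by omega
        exact Prod.ext this h2
      · intro a ha
        rcases Finset.mem_erase.mp ha with ⟨hne, hmem'⟩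
        refine Finset.mem_erase.mpr ⟨?_, Finset.HasAntidiagonal.swap_mem_antidiagonal.mpr hmem'⟩
        intro h'
        apply hne
        have h1 : a.2 = m := congrArg Prod.fst h'
        have h2 : a.1 = m := congrArg Prod.snd h'
        exact Prod.ext h2 h1
      · intro a _; rfl
    rw [h0, add_zero]
    have hm2 : n / 2 = m := by omega
    rw [hm2]; exact zmod2_mul_self _
  · rw [if_neg h]
    apply Finset.sum_involution (fun p _ => Prod.swap p)
    · intro a _; rw [mul_comm]; exact CharTwo.add_self_eq_zero _
    · intro a ha _
      have h12 : a.1 + a.2 = n := Finset.HasAntidiagonal.mem_antidiagonal.mp ha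
      intro hsw
      have : a.2 = a.1 := congrArg Prod.fst hsw
      exact h ⟨a.1, by omega⟩
    · intro a ha; exact Finset.HasAntidiagonal.swap_mem_antidiagonal.mpr ha
    · intro a _; rfl

lemma coeff_sq (f : PowerSeries (ZMod 2)) (n : ℕ) :
    PowerSeries.coeff n (f ^ 2) =
      if Even n then PowerSeries.coeff (n / 2) f else 0 := by
  rw [sq, PowerSeries.coeff_mul]
  exact sum_sq (fun i => PowerSeries.coeff i f) n

lemma sq_inj {c k m : ℕ} (hc : 0 < c) (h : c * k ^ 2 = c * m ^ 2) : k = m := by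
  have : k ^ 2 = m ^ 2 := Nat.eq_of_mul_eq_mul_left hc h
  exact Nat.pow_left_injective (by norm_num) this

/-- key indicator lemma -/
lemma key (c n : ℕ) (hc : 0 < c) :
    ((if ∃ k : ℕ, 0 < k ∧ n = c * k ^ 2 then (1 : ZMod 2) else 0) +
      if ∃ k : ℕ, 0 < k ∧ n = 4 * c * k ^ 2 then 1 else 0) =
    if ∃ k : ℕ, Odd k ∧ 0 < k ∧ n = c * k ^ 2 then 1 else 0 := by
  by_cases h1 : ∃ k : ℕ, 0 < k ∧ n = c * k ^ 2
  · obtain ⟨k, hk, rfl⟩ := h1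
    rw [if_pos ⟨k, hk, rfl⟩]
    rcases Nat.even_or_odd k with he | ho
    · obtain ⟨j, rfl⟩ := he
      have hj : 0 < j := by omega
      rw [if_pos ⟨j, hj, by ring⟩, if_neg, CharTwo.add_self_eq_zero]
      rintro ⟨m, hmo, hm, hme⟩
      have : j + j = m := sq_inj hc hme
      rw [← this] at hmo
      exact (Nat.not_odd_iff_even.mpr ⟨j, rfl⟩) hmo
    · rw [if_neg, if_pos ⟨k, ho, hk, rfl⟩, add_zero]
      rintro ⟨m, hm, hme⟩
      have hme' : c * k ^ 2 = c * (2 * m) ^ 2 := by rw [hme]; ring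
      have : k = 2 * m := sq_inj hc hme'
      rw [this] at ho
      exact (Nat.not_odd_iff_even.mpr ⟨m, by omega⟩) ho
  · rw [if_neg h1, if_neg, if_neg, add_zero]
    · rintro ⟨m, _, hm, hme⟩; exact h1 ⟨m, hm, hme⟩
    · rintro ⟨m, hm, hme⟩; exact h1 ⟨2 * m, by omega, by rw [hme]; ring⟩

theorem stmt3 : rser ^ 2 + rser = Fser + Gser := by
  ext n
  rw [map_add, map_add, coeff_sq]
  simp only [rser, Fser, Gser, thetaC, map_add, PowerSeries.coeff_mk]
  by_cases h : Even n
  · obtain ⟨m, hm⟩ := h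
    have hm2 : n / 2 = m := by omega
    rw [if_pos ⟨m, by omega⟩, hm2]
    have e1 : (∃ k : ℕ, 0 < k ∧ m = 1 * k ^ 2) ↔ ∃ k : ℕ, 0 < k ∧ n = 2 * k ^ 2 := by
      constructor <;> rintro ⟨k, hk, hke⟩ <;> exact ⟨k, hk, by omega⟩
    have e2 : (∃ k : ℕ, 0 < k ∧ m = 2 * k ^ 2) ↔ ∃ k : ℕ, 0 < k ∧ n = 4 * 1 * k ^ 2 := by
      constructor <;> rintro ⟨k, hk, hke⟩ <;> exact ⟨k, hk, by omega⟩
    have e3 : (∃ k : ℕ, 0 < k ∧ m = 3 * k ^ 2) ↔ ∃ k : ℕ, 0 < k ∧ n = 6 * k ^ 2 := by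
      constructor <;> rintro ⟨k, hk, hke⟩ <;> exact ⟨k, hk, by omega⟩
    have e6 : (∃ k : ℕ, 0 < k ∧ m = 6 * k ^ 2) ↔ ∃ k : ℕ, 0 < k ∧ n = 4 * 3 * k ^ 2 := by
      constructor <;> rintro ⟨k, hk, hke⟩ <;> exact ⟨k, hk, by omega⟩
    rw [if_congr e1 rfl rfl, if_congr e2 rfl rfl, if_congr e3 rfl rfl, if_congr e6 rfl rfl]
    have hF : (∃ k : ℕ, Odd k ∧ 0 < k ∧ n = k ^ 2) ↔ ∃ k : ℕ, Odd k ∧ 0 < k ∧ n = 1 * k ^ 2 := by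
      constructor <;> rintro ⟨k, ho, hk, hke⟩ <;> exact ⟨k, ho, hk, by omega⟩
    rw [if_congr hF rfl rfl]
    rw [← key 1 n (by norm_num), ← key 3 n (by norm_num)]
    abel_nf
    simp [CharTwo.two_eq_zero]
  · rw [if_neg h, zero_add]
    have h2 : ¬ ∃ k : ℕ, 0 < k ∧ n = 2 * k ^ 2 := by
      rintro ⟨k, hk, rfl⟩; exact h ⟨k ^ 2, by ring⟩
    have h6 : ¬ ∃ k : ℕ, 0 < k ∧ n = 6 * k ^ 2 := by
      rintro ⟨k, hk, rfl⟩; exact h ⟨3 * k ^ 2, by ring⟩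
    rw [if_neg h2, if_neg h6, add_zero, add_zero]
    congr 1
    · apply if_congr _ rfl rfl
      constructor
      · rintro ⟨k, hk, hke⟩
        refine ⟨k, ?_, hk, by omega⟩
        rcases Nat.even_or_odd k with he | ho
        · obtain ⟨j, rfl⟩ := he
          exact absurd ⟨(j + j) * j, by subst hke; ring⟩ h
        · exact ho
      · rintro ⟨k, _, hk, hke⟩; exact ⟨k, hk, by omega⟩
    · apply if_congr _ rfl rfl
      constructor
      · rintro ⟨k, hk, hke⟩
        refine ⟨k, ?_, hk, hke⟩
        rcases Nat.even_or_odd k with he | ho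
        · obtain ⟨j, rfl⟩ := he
          exact absurd ⟨3 * ((j + j) * j), by subst hke; ring⟩ h
        · exact ho
      · rintro ⟨k, _, hk, hke⟩; exact ⟨k, hk, hke⟩
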